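/- For q = 1/2 and rho in (0,1), the Jacobian matrix of the vector field b at the interior equilibrium z = (1/(2(1+rho)), rho/(2(1+rho))) has two strictly negative real eigenvalues (equivalently, its trace is negative and its determinant is positive, and its discriminant is nonnegative). -/

import Mathlib

/-- For `q = 1/2` and `ρ ∈ (0,1)`, the Jacobian matrix of the vector field
`b(x,y) = ((1/2-x)(x+y) - ρx(1-x-y), ρ(1/2-y)(x+y) - y(1-x-y))` at the interior equilibrium
`z = (1/(2(1+ρ)), ρ/(2(1+ρ)))` has two strictly negative real eigenvalues: its trace is
negative, its determinant is positive, its discriminant is nonnegative, and every real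
eigenvalue is strictly negative. -/
theorem jacobian_at_interior_equilibrium_stable (ρ : ℝ) (hρ : ρ ∈ Set.Ioo (0 : ℝ) 1) :
    let b1 : ℝ → ℝ → ℝ := fun x y => (1/2 - x) * (x + y) - ρ * x * (1 - x - y)
    let b2 : ℝ → ℝ → ℝ := fun x y => ρ * (1/2 - y) * (x + y) - y * (1 - x - y)
    let z1 : ℝ := 1 / (2 * (1 + ρ))
    let z2 : ℝ := ρ / (2 * (1 + ρ))
    let a11 := deriv (fun x => b1 x z2) z1
    let a12 := deriv (fun y => b1 z1 y) z2
    let a21 := deriv (fun x => b2 x z2) z1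
    let a22 := deriv (fun y => b2 z1 y) z2
    a11 + a22 < 0 ∧ 0 < a11 * a22 - a12 * a21 ∧
    0 ≤ (a11 + a22) ^ 2 - 4 * (a11 * a22 - a12 * a21) ∧
    ∀ μ : ℝ, (∃ v : Fin 2 → ℝ, v ≠ 0 ∧
        (Matrix.of ![![a11, a12], ![a21, a22]]).mulVec v = μ • v) → μ < 0 := by
  obtain ⟨h0, h1⟩ := hρ
  intro b1 b2 z1 z2 a11 a12 a21 a22
  have hd : (0:ℝ) < 1 + ρ := by linarith
  have hd' : (1:ℝ) + ρ ≠ 0 := ne_of_gt hd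
  have hz1 : z1 = 1 / (2 * (1 + ρ)) := rfl
  have hz2 : z2 = ρ / (2 * (1 + ρ)) := rfl
  have ha11 : a11 = -(1 + ρ^2) / (2 * (1 + ρ)) := by
    have H : HasDerivAt (fun x => (1/2 - x) * (x + z2) - ρ * x * (1 - x - z2))
        (-(1 + ρ^2) / (2 * (1 + ρ))) z1 := by
      have T := (((hasDerivAt_id z1).const_sub (1/2)).mul ((hasDerivAt_id z1).add_const z2)).sub
        (((hasDerivAt_const z1 ρ).mul (hasDerivAt_id z1)).mul
          (((hasDerivAt_id z1).const_sub 1).sub_const z2))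
      refine T.congr_deriv ?_
      simp only [id, Pi.mul_apply]
      rw [hz1, hz2]; field_simp; ring
    exact H.deriv
  have ha12 : a12 = ρ / (1 + ρ) := by
    have H : HasDerivAt (fun y => (1/2 - z1) * (z1 + y) - ρ * z1 * (1 - z1 - y))
        (ρ / (1 + ρ)) z2 := by
      have T := ((hasDerivAt_const z2 (1/2 - z1)).mul ((hasDerivAt_id z2).const_add z1)).sub
        ((hasDerivAt_const z2 (ρ * z1)).mul ((hasDerivAt_id z2).const_sub (1 - z1)))
      refine T.congr_deriv ?_
      rw [hz1]; field_simp; ring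
    exact H.deriv
  have ha21 : a21 = ρ / (1 + ρ) := by
    have H : HasDerivAt (fun x => ρ * (1/2 - z2) * (x + z2) - z2 * (1 - x - z2))
        (ρ / (1 + ρ)) z1 := by
      have T := ((hasDerivAt_const z1 (ρ * (1/2 - z2))).mul ((hasDerivAt_id z1).add_const z2)).sub
        ((hasDerivAt_const z1 z2).mul (((hasDerivAt_id z1).const_sub 1).sub_const z2))
      refine T.congr_deriv ?_
      rw [hz2]; field_simp; ring
    exact H.deriv
  have ha22 : a22 = -(1 + ρ^2) / (2 * (1 + ρ)) := by
    have H : HasDerivAt (fun y => ρ * (1/2 - y) * (z1 + y) - y * (1 - z1 - y))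
        (-(1 + ρ^2) / (2 * (1 + ρ))) z2 := by
      have T := ((((hasDerivAt_id z2).const_sub (1/2)).const_mul ρ).mul
          ((hasDerivAt_id z2).const_add z1)).sub
        ((hasDerivAt_id z2).mul ((hasDerivAt_id z2).const_sub (1 - z1)))
      refine T.congr_deriv ?_
      simp only [id, Pi.mul_apply]
      rw [hz1, hz2]; field_simp; ring
    exact H.deriv
  have htr : a11 + a22 < 0 := by
    rw [ha11, ha22]
    have h : -(1 + ρ^2) / (2 * (1 + ρ)) < 0 := by
      apply div_neg_of_neg_of_pos
      · nlinarith
      · positivity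
    linarith
  have hdet : 0 < a11 * a22 - a12 * a21 := by
    rw [ha11, ha22, ha12, ha21]
    have h2 : (2 * (1 + ρ)) ≠ 0 := by positivity
    have : -(1 + ρ^2) / (2 * (1 + ρ)) * (-(1 + ρ^2) / (2 * (1 + ρ))) -
        ρ / (1 + ρ) * (ρ / (1 + ρ)) = (1 - ρ)^2 / 4 := by
      field_simp; ring
    rw [this]
    have : (0:ℝ) < 1 - ρ := by linarith
    positivity
  refine ⟨htr, hdet, ?_, ?_⟩
  · rw [ha11, ha22, ha12, ha21]
    have : (-(1 + ρ^2) / (2 * (1 + ρ)) + -(1 + ρ^2) / (2 * (1 + ρ)))^2 -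
        4 * (-(1 + ρ^2) / (2 * (1 + ρ)) * (-(1 + ρ^2) / (2 * (1 + ρ))) -
          ρ / (1 + ρ) * (ρ / (1 + ρ))) = (2 * ρ / (1 + ρ))^2 := by
      field_simp; ring
    rw [this]
    positivity
  · rintro μ ⟨v, hv, hAv⟩
    have e0 : a11 * v 0 + a12 * v 1 = μ * v 0 := by
      have := congrFun hAv 0
      simpa [Matrix.mulVec, dotProduct, Fin.sum_univ_two] using this
    have e1 : a21 * v 0 + a22 * v 1 = μ * v 1 := by
      have := congrFun hAv 1
      simpa [Matrix.mulVec, dotProduct, Fin.sum_univ_two] using this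
    have hchar : μ^2 - (a11 + a22) * μ + (a11 * a22 - a12 * a21) = 0 := by
      have c0 : (μ^2 - (a11 + a22) * μ + (a11 * a22 - a12 * a21)) * v 0 = 0 := by
        linear_combination (a22 - μ) * e0 - a12 * e1
      have c1 : (μ^2 - (a11 + a22) * μ + (a11 * a22 - a12 * a21)) * v 1 = 0 := by
        linear_combination (a11 - μ) * e1 - a21 * e0
      rcases mul_eq_zero.1 c0 with h | h
      · exact h
      · rcases mul_eq_zero.1 c1 with h' | h'
        · exact h'
        · exact absurd (funext fun i => by fin_cases i <;> simpa [h, h']) hv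
    by_contra hμ
    push_neg at hμ
    nlinarith [mul_nonpos_of_nonpos_of_nonneg htr.le hμ, sq_nonneg μ]
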